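/- Let (P_θ)_{θ∈Θ} be a statistical model on Ω, Q a probability measure on Θ, T the joint probability measure on Ω × Θ with T(A×B) = ∫_B P_θ(A) Q(dθ), and κ ∈ (0,1). (a) For every p-function f w.r.t. T there exist a conditional p-function g w.r.t. (P_θ) and a p-function h w.r.t. Q such that g(ω;θ)·h(θ) ≤ κ^{−1} f(ω,θ)^{1−κ} for T-almost every (ω,θ). (b) For every conditional p-function g w.r.t. (P_θ) and every p-function h w.r.t. Q, the function (ω,θ) ↦ min(1, κ^{−2}·(g(ω;θ)·h(θ))^{1−κ}) is a p-function w.r.t. T. -/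

import Mathlib

open MeasureTheory ProbabilityTheory
open scoped ENNReal

section PfunHelpers
open Set
variable {α : Type*} [MeasurableSpace α]

lemma pfun_int1 {κ a : ℝ} (hκ1 : κ < 1) (ha : 0 < a) (ha1 : a ≤ 1) :
    ∫ s in Ioc a 1, (1-κ) * s^(κ-2) = a^(κ-1) - 1 := by
  rw [← intervalIntegral.integral_of_le ha1, intervalIntegral.integral_const_mul,
    integral_rpow (Or.inr ⟨by intro h; linarith, fun h => (notMem_uIcc_of_lt ha one_pos h).elim⟩)]
  have h2 : κ - 2 + 1 = κ - 1 := by ring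
  rw [h2, Real.one_rpow]
  have hne : κ - 1 ≠ 0 := by intro h; linarith
  field_simp
  ring

lemma pfun_int2 {κ : ℝ} (hκ : 0 < κ) :
    ∫ s in Ioc (0:ℝ) 1, (1-κ) * s^(κ-1) = (1-κ)/κ := by
  rw [← intervalIntegral.integral_of_le zero_le_one, intervalIntegral.integral_const_mul,
    integral_rpow (Or.inl (by linarith))]
  have h2 : κ - 1 + 1 = κ := by ring
  rw [h2, Real.one_rpow, Real.zero_rpow hκ.ne']
  ring

lemma pfun_int3 {t' : ℝ} (ht : 0 < t') (ht1 : t' ≤ 1) :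
    ∫ s in Ioc t' 1, t' * s⁻¹ = t' * Real.log (1/t') := by
  rw [← intervalIntegral.integral_of_le ht1, intervalIntegral.integral_const_mul,
    integral_inv (fun h => (notMem_uIcc_of_lt ht one_pos h).elim)]

lemma pfun_keyineq {κ t' : ℝ} (hκ : 0 < κ) (hκ1 : κ < 1) (ht : 0 < t') (ht1 : t' ≤ 1) :
    t' * (1 + Real.log (1/t')) ≤ κ⁻¹ * κ⁻¹ * t' ^ (1-κ) := by
  have hu : 0 ≤ Real.log (1/t') := Real.log_nonneg (by rw [le_div_iff₀ ht]; linarith)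
  set u := Real.log (1/t') with hu'
  have hlog : Real.log t' = -u := by rw [hu', one_div, Real.log_inv]; ring
  have ht'' : t' = Real.exp (-u) := by rw [← hlog, Real.exp_log ht]
  have hmain : κ^2 * (1+u) ≤ Real.exp (κ*u) := by
    have h1 : κ*(1+u) ≤ Real.exp (κ*(1+u) - 1) := by
      have := Real.add_one_le_exp (κ*(1+u)-1); linarith
    have h2 : Real.exp (κ*(1+u)-1) ≤ Real.exp (κ*u) := Real.exp_le_exp.2 (by nlinarith)
    nlinarith [Real.exp_pos (κ*u)]
  have hrpow : t'^(1-κ) = Real.exp (κ*u) * Real.exp (-u) := by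
    rw [Real.rpow_def_of_pos ht, hlog, ← Real.exp_add]; congr 1; ring
  have hfin : κ^2 * (t'*(1+u)) ≤ t'^(1-κ) := by
    rw [hrpow]
    calc κ^2 * (t'*(1+u)) = (κ^2*(1+u)) * Real.exp (-u) := by rw [ht'']; ring
    _ ≤ Real.exp (κ*u) * Real.exp (-u) :=
        mul_le_mul_of_nonneg_right hmain (Real.exp_pos (-u)).le
  have hsq : κ⁻¹ * κ⁻¹ = (κ^2)⁻¹ := by rw [sq, mul_inv]
  rw [hsq, mul_comm ((κ^2)⁻¹) _, ← div_eq_mul_inv, le_div_iff₀ (by positivity)]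
  linarith [hfin]

lemma pfun_swap_lint (μ : Measure α) [SFinite μ]
    {W : α → ℝ → ℝ≥0∞} (hW : Measurable (Function.uncurry W)) :
    ∫⁻ x, (∫⁻ s in Ioc (0:ℝ) 1, W x s ∂volume) ∂μ = ∫⁻ s in Ioc (0:ℝ) 1, ∫⁻ x, W x s ∂μ :=
  lintegral_lintegral_swap hW.aemeasurable

lemma pfun_layer (μ : Measure α) [IsProbabilityMeasure μ]
    {F : α → ℝ≥0∞} (hF : Measurable F) (hF1 : ∀ x, F x ≤ 1) :
    ∫⁻ x, F x ∂μ = ∫⁻ s in Ioc (0:ℝ) 1, μ {x | ENNReal.ofReal s < F x} := by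
  have hA : MeasurableSet {p : α × ℝ | ENNReal.ofReal p.2 < F p.1} :=
    measurableSet_lt (ENNReal.measurable_ofReal.comp measurable_snd) (hF.comp measurable_fst)
  set W : α → ℝ → ℝ≥0∞ := fun x s => {p : α × ℝ | ENNReal.ofReal p.2 < F p.1}.indicator 1 (x, s)
    with hW'
  have hW : Measurable (Function.uncurry W) := measurable_one.indicator hA
  have stepA : ∀ x, (∫⁻ s in Ioc (0:ℝ) 1, W x s ∂volume) = F x := by
    intro x
    have hne : F x ≠ ∞ := (lt_of_le_of_lt (hF1 x) (by norm_num)).ne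
    have hWx : (fun s => W x s) = ({s : ℝ | ENNReal.ofReal s < F x}).indicator 1 := by
      ext s
      by_cases h : ENNReal.ofReal s < F x <;>
        simp [hW', Set.indicator, h]
    rw [hWx, lintegral_indicator
        (measurableSet_lt ENNReal.measurable_ofReal measurable_const)]
    rw [Measure.restrict_restrict (measurableSet_lt ENNReal.measurable_ofReal measurable_const)]
    have hset : {s : ℝ | ENNReal.ofReal s < F x} ∩ Ioc 0 1 = Ioo 0 ((F x).toReal) := by
      ext s
      simp only [mem_inter_iff, mem_setOf_eq, mem_Ioc, mem_Ioo]
      constructor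
      · rintro ⟨h1, h2, h3⟩
        exact ⟨h2, (ENNReal.ofReal_lt_iff_lt_toReal h2.le hne).1 h1⟩
      · rintro ⟨h2, h3⟩
        have ht1 : (F x).toReal ≤ 1 := by
          simpa using ENNReal.toReal_mono (by norm_num) (hF1 x)
        exact ⟨(ENNReal.ofReal_lt_iff_lt_toReal h2.le hne).2 h3, h2, by linarith⟩
    rw [hset]
    simp [Real.volume_Ioo, ENNReal.ofReal_toReal hne]
  have stepB : ∀ s, ∫⁻ x, W x s ∂μ = μ {x | ENNReal.ofReal s < F x} := by
    intro s
    have : (fun x => W x s) = ({x : α | ENNReal.ofReal s < F x}).indicator 1 := by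
      ext x
      by_cases h : ENNReal.ofReal s < F x <;> simp [hW', Set.indicator, h]
    rw [this, lintegral_indicator (measurableSet_lt measurable_const hF)]
    simp
  calc ∫⁻ x, F x ∂μ = ∫⁻ x, (∫⁻ s in Ioc (0:ℝ) 1, W x s ∂volume) ∂μ := by
        simp_rw [stepA]
    _ = ∫⁻ s in Ioc (0:ℝ) 1, ∫⁻ x, W x s ∂μ := pfun_swap_lint μ hW
    _ = ∫⁻ s in Ioc (0:ℝ) 1, μ {x | ENNReal.ofReal s < F x} := by simp_rw [stepB]

lemma pfun_bound_int (μ : Measure α) [IsProbabilityMeasure μ]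
    {h : α → ℝ≥0∞} (hmeas : Measurable h) (hh1 : ∀ θ, h θ ≤ 1)
    (hp : ∀ ε : ℝ≥0∞, 0 < ε → μ {θ | h θ ≤ ε} ≤ ε)
    {t' : ℝ} (ht : 0 < t') (ht1 : t' ≤ 1) :
    ∫⁻ θ, min 1 (ENNReal.ofReal t' * (h θ)⁻¹) ∂μ
      ≤ ENNReal.ofReal (t' * (1 + Real.log (1/t'))) := by
  set t : ℝ≥0∞ := ENNReal.ofReal t' with htdef
  have htpos : 0 < t := ENNReal.ofReal_pos.2 ht
  set F : α → ℝ≥0∞ := fun θ => min 1 (t * (h θ)⁻¹) with hFdef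
  have hFmeas : Measurable F := by fun_prop
  have hF1 : ∀ θ, F θ ≤ 1 := fun θ => min_le_left _ _
  rw [pfun_layer μ hFmeas hF1]
  have hmono : ∫⁻ s in Ioc (0:ℝ) 1, μ {x | ENNReal.ofReal s < F x}
      ≤ ∫⁻ s in Ioc (0:ℝ) 1, min 1 (t * (ENNReal.ofReal s)⁻¹) := by
    apply setLIntegral_mono (by fun_prop)
    intro s hs
    rcases hs with ⟨hs0, hs1⟩
    have hsfin : ENNReal.ofReal s ≠ 0 := (ENNReal.ofReal_pos.2 hs0).ne'
    refine le_min (prob_le_one) ?_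
    have hsub : {x | ENNReal.ofReal s < F x} ⊆ {x | h x ≤ t * (ENNReal.ofReal s)⁻¹} := by
      intro x hx
      simp only [Set.mem_setOf_eq] at hx ⊢
      have h1 : ENNReal.ofReal s < t * (h x)⁻¹ := lt_of_lt_of_le hx (min_le_right _ _)
      have h2 : h x * ENNReal.ofReal s ≤ t := by
        rcases eq_or_ne (h x) 0 with h0 | h0
        · simp [h0]
        · have hfin : h x ≠ ∞ := (lt_of_le_of_lt (hh1 x) (by norm_num)).ne
          calc h x * ENNReal.ofReal s ≤ h x * (t * (h x)⁻¹) :=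
                mul_le_mul_right h1.le _
          _ = t * (h x * (h x)⁻¹) := by ring
          _ = t := by rw [ENNReal.mul_inv_cancel h0 hfin, mul_one]
      calc h x = h x * ENNReal.ofReal s * (ENNReal.ofReal s)⁻¹ := by
            rw [mul_assoc, ENNReal.mul_inv_cancel hsfin ENNReal.ofReal_ne_top, mul_one]
      _ ≤ t * (ENNReal.ofReal s)⁻¹ := mul_le_mul_left h2 _
    calc μ {x | ENNReal.ofReal s < F x} ≤ μ {x | h x ≤ t * (ENNReal.ofReal s)⁻¹} :=
          measure_mono hsub
    _ ≤ t * (ENNReal.ofReal s)⁻¹ :=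
          hp _ (ENNReal.mul_pos htpos.ne' (ENNReal.inv_ne_zero.2 ENNReal.ofReal_ne_top))
  refine le_trans hmono ?_
  rw [← Ioc_union_Ioc_eq_Ioc ht.le ht1,
    lintegral_union measurableSet_Ioc (Ioc_disjoint_Ioc_of_le le_rfl)]
  have part1 : ∫⁻ s in Ioc (0:ℝ) t', min 1 (t * (ENNReal.ofReal s)⁻¹) ∂volume
      ≤ ENNReal.ofReal t' := by
    calc ∫⁻ s in Ioc (0:ℝ) t', min 1 (t * (ENNReal.ofReal s)⁻¹) ∂volume
        ≤ ∫⁻ _ in Ioc (0:ℝ) t', 1 ∂volume := setLIntegral_mono measurable_const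
          (fun s _ => min_le_left _ _)
    _ = ENNReal.ofReal t' := by simp [Real.volume_Ioc, ht.le]
  have part2 : ∫⁻ s in Ioc t' 1, min 1 (t * (ENNReal.ofReal s)⁻¹) ∂volume
      ≤ ENNReal.ofReal (t' * Real.log (1/t')) := by
    have hint : IntegrableOn (fun s => t' * s⁻¹) (Ioc t' 1) volume := by
      have hc : ContinuousOn (fun s : ℝ => t' * s⁻¹) (Icc t' 1) :=
        (continuousOn_const.mul (continuousOn_id.inv₀
          (fun s hs => (lt_of_lt_of_le ht hs.1).ne')))
      exact (hc.integrableOn_Icc).mono_set Ioc_subset_Icc_self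
    calc ∫⁻ s in Ioc t' 1, min 1 (t * (ENNReal.ofReal s)⁻¹) ∂volume
        ≤ ∫⁻ s in Ioc t' 1, ENNReal.ofReal (t' * s⁻¹) ∂volume := by
          apply setLIntegral_mono (by fun_prop)
          intro s hs
          refine le_trans (min_le_right _ _) ?_
          rw [ENNReal.ofReal_mul ht.le, ← ENNReal.ofReal_inv_of_pos (lt_trans ht hs.1)]
    _ = ENNReal.ofReal (∫ s in Ioc t' 1, t' * s⁻¹) := by
          rw [ofReal_integral_eq_lintegral_ofReal hint]
          filter_upwards [ae_restrict_mem measurableSet_Ioc] with s hs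
          have : 0 < s := lt_trans ht hs.1
          positivity
    _ = ENNReal.ofReal (t' * Real.log (1/t')) := by rw [pfun_int3 ht ht1]
  calc _ ≤ ENNReal.ofReal t' + ENNReal.ofReal (t' * Real.log (1/t')) :=
        add_le_add part1 part2
  _ = ENNReal.ofReal (t' * (1 + Real.log (1/t'))) := by
      rw [← ENNReal.ofReal_add ht.le (by
        have : 0 ≤ Real.log (1/t') := Real.log_nonneg (by rw [le_div_iff₀ ht]; linarith)
        positivity)]
      ring_nf

lemma pfun_parta_int (T : Measure α) [IsProbabilityMeasure T]
    {f : α → ℝ≥0∞} (hf : Measurable f) (hf1 : ∀ x, f x ≤ 1)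
    (hp : ∀ ε : ℝ≥0∞, 0 < ε → T {x | f x ≤ ε} ≤ ε) {κ : ℝ} (hκ : 0 < κ) (hκ1 : κ < 1) :
    ∫⁻ x, f x ^ (κ-1) ∂T ≤ ENNReal.ofReal κ⁻¹ := by
  have hA : MeasurableSet {p : α × ℝ | f p.1 ≤ ENNReal.ofReal p.2} :=
    measurableSet_le (hf.comp measurable_fst) (ENNReal.measurable_ofReal.comp measurable_snd)
  set W : α → ℝ → ℝ≥0∞ := fun x s => ENNReal.ofReal ((1-κ) * s^(κ-2)) *
      ({p : α × ℝ | f p.1 ≤ ENNReal.ofReal p.2}.indicator 1 (x, s)) with hWdef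
  have hW : Measurable (Function.uncurry W) := by
    apply Measurable.mul
    · fun_prop
    · exact measurable_one.indicator hA
  have hnull : T {x | f x = 0} = 0 := by
    refine le_antisymm (ENNReal.le_of_forall_pos_le_add fun ε hε _ => ?_) zero_le
    rw [zero_add]
    refine le_trans (measure_mono fun x hx => ?_) (hp (ε : ℝ≥0∞) (by exact_mod_cast hε))
    simp only [mem_setOf_eq] at hx ⊢
    simp [hx]
  have hae : ∀ᵐ x ∂T, f x ≠ 0 := by
    rw [ae_iff]; simpa using hnull
  have claim1 : ∀ᵐ x ∂T, f x ^ (κ-1) ≤ 1 + ∫⁻ s in Ioc (0:ℝ) 1, W x s ∂volume := by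
    filter_upwards [hae] with x hx
    have hfin : f x ≠ ∞ := (lt_of_le_of_lt (hf1 x) (by norm_num)).ne
    set a := (f x).toReal with hadef
    have ha : 0 < a := ENNReal.toReal_pos hx hfin
    have ha1 : a ≤ 1 := by simpa using ENNReal.toReal_mono (by norm_num) (hf1 x)
    have hfa : f x = ENNReal.ofReal a := (ENNReal.ofReal_toReal hfin).symm
    have hWx : (fun s => W x s) =
        ({s : ℝ | f x ≤ ENNReal.ofReal s}).indicator
          (fun s => ENNReal.ofReal ((1-κ) * s^(κ-2))) := by
      ext s
      by_cases h : f x ≤ ENNReal.ofReal s <;> simp [hWdef, Set.indicator, h]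
    have hmble : MeasurableSet {s : ℝ | f x ≤ ENNReal.ofReal s} :=
      measurableSet_le measurable_const ENNReal.measurable_ofReal
    have hset : {s : ℝ | f x ≤ ENNReal.ofReal s} ∩ Ioc 0 1 = Icc a 1 := by
      ext s
      simp only [mem_inter_iff, mem_setOf_eq, mem_Ioc, mem_Icc]
      constructor
      · rintro ⟨h1, h2, h3⟩
        exact ⟨(ENNReal.le_ofReal_iff_toReal_le hfin h2.le).1 h1, h3⟩
      · rintro ⟨h2, h3⟩
        exact ⟨(ENNReal.le_ofReal_iff_toReal_le hfin (le_trans ha.le h2)).2 h2,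
          lt_of_lt_of_le ha h2, h3⟩
    have hint : IntegrableOn (fun s => (1-κ) * s^(κ-2)) (Icc a 1) volume := by
      have hc : ContinuousOn (fun s : ℝ => (1-κ) * s^(κ-2)) (Icc a 1) :=
        continuousOn_const.mul (continuousOn_id.rpow_const
          (fun s hs => Or.inl (lt_of_lt_of_le ha hs.1).ne'))
      exact hc.integrableOn_Icc
    have hcomp : ∫⁻ s in Ioc (0:ℝ) 1, W x s ∂volume = ENNReal.ofReal (a^(κ-1) - 1) := by
      rw [hWx, lintegral_indicator hmble, Measure.restrict_restrict hmble, hset,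
        ← ofReal_integral_eq_lintegral_ofReal hint ?_]
      · rw [integral_Icc_eq_integral_Ioc, pfun_int1 hκ1 ha ha1]
      · filter_upwards [ae_restrict_mem measurableSet_Icc] with s hs
        have h0 : 0 < s := lt_of_lt_of_le ha hs.1
        have h1 : (0:ℝ) < s ^ (κ-2) := Real.rpow_pos_of_pos h0 _
        have := mul_pos (by linarith : (0:ℝ) < 1-κ) h1
        simpa using this.le
    rw [hcomp, hfa, ENNReal.ofReal_rpow_of_pos ha]
    have hge1 : 1 ≤ a ^ (κ-1) :=
      Real.one_le_rpow_of_pos_of_le_one_of_nonpos ha ha1 (by linarith)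
    rw [← ENNReal.ofReal_one, ← ENNReal.ofReal_add zero_le_one (by linarith)]
    exact le_of_eq (by congr 1; ring)
  have hinner : Measurable fun x => ∫⁻ s in Ioc (0:ℝ) 1, W x s ∂volume :=
    Measurable.lintegral_prod_right hW
  calc ∫⁻ x, f x ^ (κ-1) ∂T
      ≤ ∫⁻ x, (1 + ∫⁻ s in Ioc (0:ℝ) 1, W x s ∂volume) ∂T := lintegral_mono_ae claim1
  _ = 1 + ∫⁻ x, (∫⁻ s in Ioc (0:ℝ) 1, W x s ∂volume) ∂T := by
      rw [lintegral_add_left measurable_const, lintegral_const, measure_univ, mul_one]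
  _ = 1 + ∫⁻ s in Ioc (0:ℝ) 1, ∫⁻ x, W x s ∂T := by rw [pfun_swap_lint T hW]
  _ = 1 + ∫⁻ s in Ioc (0:ℝ) 1,
        ENNReal.ofReal ((1-κ) * s^(κ-2)) * T {x | f x ≤ ENNReal.ofReal s} := by
      congr 1
      refine setLIntegral_congr_fun measurableSet_Ioc (fun s _ => ?_)
      have hWs : (fun x => W x s) = ({x : α | f x ≤ ENNReal.ofReal s}).indicator
          (fun _ => ENNReal.ofReal ((1-κ) * s^(κ-2))) := by
        ext x
        by_cases h : f x ≤ ENNReal.ofReal s <;> simp [hWdef, Set.indicator, h]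
      rw [hWs, lintegral_indicator (measurableSet_le hf measurable_const),
        setLIntegral_const, mul_comm]
  _ ≤ 1 + ∫⁻ s in Ioc (0:ℝ) 1,
        ENNReal.ofReal ((1-κ) * s^(κ-1)) := by
      gcongr 1 + ?_
      apply setLIntegral_mono (by fun_prop)
      intro s hs
      have h2 : T {x | f x ≤ ENNReal.ofReal s} ≤ ENNReal.ofReal s :=
        hp _ (ENNReal.ofReal_pos.2 hs.1)
      calc ENNReal.ofReal ((1-κ) * s^(κ-2)) * T {x | f x ≤ ENNReal.ofReal s}
          ≤ ENNReal.ofReal ((1-κ) * s^(κ-2)) * ENNReal.ofReal s := mul_le_mul_right h2 _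
      _ = ENNReal.ofReal ((1-κ) * s^(κ-1)) := by
          rw [← ENNReal.ofReal_mul (by
            have h1 : (0:ℝ) < s ^ (κ-2) := Real.rpow_pos_of_pos hs.1 _
            have := mul_pos (by linarith : (0:ℝ) < 1-κ) h1
            simpa using this.le)]
          congr 1
          have : s ^ (κ-1) = s ^ (κ-2) * s := by
            rw [show κ - 1 = (κ-2) + 1 by ring, Real.rpow_add hs.1, Real.rpow_one]
          rw [this]; ring
  _ ≤ ENNReal.ofReal κ⁻¹ := by
      have hint2 : IntegrableOn (fun s => (1-κ) * s^(κ-1)) (Ioc (0:ℝ) 1) volume := by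
        have : IntervalIntegrable (fun s : ℝ => s ^ (κ-1)) volume 0 1 :=
          intervalIntegral.intervalIntegrable_rpow' (by linarith)
        rw [intervalIntegrable_iff, uIoc_of_le zero_le_one] at this
        exact this.const_mul _
      rw [← ofReal_integral_eq_lintegral_ofReal hint2 ?_]
      · rw [pfun_int2 hκ]
        rw [← ENNReal.ofReal_one, ← ENNReal.ofReal_add zero_le_one
            (div_nonneg (by linarith) hκ.le)]
        apply ENNReal.ofReal_le_ofReal
        rw [← sub_nonneg]
        have : κ⁻¹ - (1 + (1-κ)/κ) = 0 := by field_simp; ring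
        linarith
      · filter_upwards [ae_restrict_mem measurableSet_Ioc] with s hs
        have h1 : (0:ℝ) < s ^ (κ-1) := Real.rpow_pos_of_pos hs.1 _
        have := mul_pos (by linarith : (0:ℝ) < 1-κ) h1
        simpa using this.le

end PfunHelpers

open Set in
/-- Bayesian model `(P_θ)_{θ∈Θ}` with prior `Q`, joint measure `T`
on `Ω × Θ` (the swap-pushforward of `Q ⊗ₘ P`), and `κ ∈ (0,1)`.
(a) For every p-function `f` w.r.t. `T` there are a conditional p-function `g`
w.r.t. `(P_θ)` and a p-function `h` w.r.t. `Q` with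
`g(ω;θ)·h(θ) ≤ κ⁻¹ · f(ω,θ)^(1-κ)` `T`-a.e.
(b) For every conditional p-function `g` w.r.t. `(P_θ)` and p-function `h`
w.r.t. `Q`, `(ω,θ) ↦ min 1 (κ⁻² (g(ω;θ) h(θ))^(1-κ))` is a p-function w.r.t. `T`. -/
theorem stmt7 {Ω Θ : Type*} [MeasurableSpace Ω] [MeasurableSpace Θ]
    (P : Kernel Θ Ω) [IsMarkovKernel P]
    (Q : Measure Θ) [IsProbabilityMeasure Q]
    (κ : ℝ) (hκ : κ ∈ Set.Ioo (0 : ℝ) 1) :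
    (∀ f : Ω × Θ → ℝ≥0∞, Measurable f → (∀ x, f x ≤ 1) →
      (∀ ε : ℝ≥0∞, 0 < ε → ((Q.compProd P).map Prod.swap) {x | f x ≤ ε} ≤ ε) →
      ∃ g : Ω × Θ → ℝ≥0∞, ∃ h : Θ → ℝ≥0∞,
        Measurable g ∧ (∀ x, g x ≤ 1) ∧
        (∀ θ, ∀ ε : ℝ≥0∞, 0 < ε → P θ {ω | g (ω, θ) ≤ ε} ≤ ε) ∧
        Measurable h ∧ (∀ θ, h θ ≤ 1) ∧
        (∀ ε : ℝ≥0∞, 0 < ε → Q {θ | h θ ≤ ε} ≤ ε) ∧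
        (∀ᵐ x ∂((Q.compProd P).map Prod.swap),
          g x * h x.2 ≤ (ENNReal.ofReal κ)⁻¹ * f x ^ (1 - κ))) ∧
    (∀ g : Ω × Θ → ℝ≥0∞, ∀ h : Θ → ℝ≥0∞,
      Measurable g → (∀ x, g x ≤ 1) →
      (∀ θ, ∀ ε : ℝ≥0∞, 0 < ε → P θ {ω | g (ω, θ) ≤ ε} ≤ ε) →
      Measurable h → (∀ θ, h θ ≤ 1) →
      (∀ ε : ℝ≥0∞, 0 < ε → Q {θ | h θ ≤ ε} ≤ ε) →
      ∀ ε : ℝ≥0∞, 0 < ε →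
        ((Q.compProd P).map Prod.swap)
          {x | min 1 (((ENNReal.ofReal κ) ^ 2)⁻¹ * (g x * h x.2) ^ (1 - κ)) ≤ ε} ≤ ε) := by
  obtain ⟨hκ0, hκ1⟩ := hκ
  set T : Measure (Ω × Θ) := (Q.compProd P).map Prod.swap with hTdef
  have hTprob : IsProbabilityMeasure T := Measure.isProbabilityMeasure_map measurable_swap.aemeasurable
  set κE : ℝ≥0∞ := ENNReal.ofReal κ with hκEdef
  have hκE0 : κE ≠ 0 := (ENNReal.ofReal_pos.2 hκ0).ne'
  have hκEtop : κE ≠ ∞ := ENNReal.ofReal_ne_top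
  have hκE1 : κE < 1 := by
    rw [hκEdef, ← ENNReal.ofReal_one]
    exact (ENNReal.ofReal_lt_ofReal_iff one_pos).2 hκ1
  have Tapp : ∀ S : Set (Ω × Θ), MeasurableSet S →
      T S = ∫⁻ θ, P θ {ω | (ω, θ) ∈ S} ∂Q := by
    intro S hS
    rw [hTdef, Measure.map_apply measurable_swap hS,
      Measure.compProd_apply (hS.preimage measurable_swap)]
    rfl
  have Tlint : ∀ {e : Ω × Θ → ℝ≥0∞}, Measurable e →
      ∫⁻ x, e x ∂T = ∫⁻ θ, ∫⁻ ω, e (ω, θ) ∂P θ ∂Q := by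
    intro e he
    rw [hTdef, lintegral_map he measurable_swap,
      Measure.lintegral_compProd (f := fun a => e a.swap) (he.comp measurable_swap)]
    rfl
  constructor
  · -- part (a)
    intro f hf hf1 hfp
    set e : Ω × Θ → ℝ≥0∞ := fun x => κE * f x ^ (κ - 1) with hedef
    have he : Measurable e := by fun_prop
    have helow : ∀ x, κE ≤ e x := by
      intro x
      have h1 : 1 ≤ f x ^ (κ - 1) := by
        rw [show κ - 1 = -(1-κ) by ring, ENNReal.rpow_neg, ENNReal.one_le_inv]
        exact ENNReal.rpow_le_one (hf1 x) (by linarith)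
      calc κE = κE * 1 := (mul_one _).symm
      _ ≤ κE * f x ^ (κ - 1) := mul_le_mul_right h1 _
    have hetot : ∫⁻ x, e x ∂T ≤ 1 := by
      calc ∫⁻ x, e x ∂T = κE * ∫⁻ x, f x ^ (κ - 1) ∂T := lintegral_const_mul κE (by fun_prop)
      _ ≤ κE * ENNReal.ofReal κ⁻¹ :=
          mul_le_mul_right (pfun_parta_int T hf hf1 hfp hκ0 hκ1) _
      _ = ENNReal.ofReal (κ * κ⁻¹) := (ENNReal.ofReal_mul hκ0.le).symm
      _ = 1 := by rw [mul_inv_cancel₀ hκ0.ne', ENNReal.ofReal_one]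
    set H : Θ → ℝ≥0∞ := fun θ => ∫⁻ ω, e (ω, θ) ∂P θ with hHdef
    have hHmeas : Measurable H :=
      Measurable.lintegral_kernel_prod_right (f := fun θ ω => e (ω, θ))
        (he.comp measurable_swap)
    have hHlow : ∀ θ, κE ≤ H θ := by
      intro θ
      calc κE = ∫⁻ _, κE ∂P θ := by rw [lintegral_const, measure_univ, mul_one]
      _ ≤ H θ := lintegral_mono fun ω => helow (ω, θ)
    have hH0 : ∀ θ, H θ ≠ 0 := fun θ =>
      fun h => hκE0 (le_antisymm (h ▸ hHlow θ) zero_le)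
    have hHint : ∫⁻ θ, H θ ∂Q ≤ 1 := by rw [← Tlint he]; exact hetot
    refine ⟨fun x => if H x.2 = ∞ then 1 else min 1 (H x.2 * (e x)⁻¹),
      fun θ => min 1 (H θ)⁻¹, ?_, ?_, ?_, ?_, ?_, ?_, ?_⟩
    · exact Measurable.ite ((hHmeas.comp measurable_snd) (measurableSet_singleton ∞))
        measurable_const (by fun_prop)
    · intro x
      by_cases hH : H x.2 = ∞ <;> simp [hH, min_le_left]
    · -- conditional p-function
      intro θ ε hε
      by_cases hε1 : 1 ≤ ε
      · exact le_trans prob_le_one hε1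
      push_neg at hε1
      by_cases hH : H θ = ∞
      · have : {ω | (if H (ω, θ).2 = ∞ then 1
            else min 1 (H (ω, θ).2 * (e (ω, θ))⁻¹)) ≤ ε} = ∅ := by
          ext ω
          simp [hH, not_le, hε1]
        rw [this]
        simp
      · have hεtop : ε ≠ ∞ := hε1.trans (by norm_num) |>.ne
        set c : ℝ≥0∞ := H θ * ε⁻¹ with hcdef
        have hc0 : c ≠ 0 := mul_ne_zero (hH0 θ) (ENNReal.inv_ne_zero.2 hεtop)
        have hcfin : c ≠ ∞ := ENNReal.mul_ne_top hH (ENNReal.inv_ne_top.2 hε.ne')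
        have hsub : {ω | (if H (ω, θ).2 = ∞ then 1
            else min 1 (H (ω, θ).2 * (e (ω, θ))⁻¹)) ≤ ε} ⊆ {ω | c ≤ e (ω, θ)} := by
          intro ω hω
          have hω' : min 1 (H θ * (e (ω, θ))⁻¹) ≤ ε := by
            simpa [hH] using hω
          have h2 : H θ * (e (ω, θ))⁻¹ ≤ ε := by
            rcases min_le_iff.1 hω' with h | h
            · exact absurd h (not_le.2 hε1)
            · exact h
          simp only [mem_setOf_eq]
          rcases eq_or_ne (e (ω, θ)) ∞ with hetop' | hetop'
          · rw [hetop']; exact le_top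
          · have he0' : e (ω, θ) ≠ 0 :=
              fun h => hκE0 (le_antisymm (h ▸ helow (ω, θ)) zero_le)
            calc c = H θ * (e (ω, θ))⁻¹ * e (ω, θ) * ε⁻¹ := by
                  rw [mul_assoc (H θ), ENNReal.inv_mul_cancel he0' hetop', mul_one, hcdef]
            _ ≤ ε * e (ω, θ) * ε⁻¹ := by
                  exact mul_le_mul_left (mul_le_mul_left h2 _) _
            _ = e (ω, θ) * (ε * ε⁻¹) := by ring
            _ = e (ω, θ) := by rw [ENNReal.mul_inv_cancel hε.ne' hεtop, mul_one]
        have hemeas : Measurable (fun ω => e (ω, θ)) :=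
          he.comp (measurable_id.prodMk measurable_const)
        have hmark : c * P θ {ω | c ≤ e (ω, θ)} ≤ ∫⁻ ω, e (ω, θ) ∂P θ :=
          mul_meas_ge_le_lintegral₀ (μ := P θ) (f := fun ω => e (ω, θ)) hemeas.aemeasurable c
        have hmark2 : P θ {ω | c ≤ e (ω, θ)} ≤ ε := by
          have h3 : c * P θ {ω | c ≤ e (ω, θ)} ≤ H θ := hmark
          calc P θ {ω | c ≤ e (ω, θ)}
              = c⁻¹ * (c * P θ {ω | c ≤ e (ω, θ)}) := by
                rw [← mul_assoc, ENNReal.inv_mul_cancel hc0 hcfin, one_mul]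
          _ ≤ c⁻¹ * H θ := mul_le_mul_right h3 _
          _ = ε := by
                rw [hcdef, ENNReal.mul_inv (Or.inl (hH0 θ)) (Or.inl hH), inv_inv,
                  mul_comm ((H θ)⁻¹) ε, mul_assoc, ENNReal.inv_mul_cancel (hH0 θ) hH, mul_one]
        exact le_trans (measure_mono hsub) hmark2
    · fun_prop
    · intro θ; exact min_le_left _ _
    · -- h is p-function wrt Q
      intro ε hε
      by_cases hε1 : 1 ≤ ε
      · exact le_trans prob_le_one hε1
      push_neg at hε1
      have hεtop : ε ≠ ∞ := hε1.trans (by norm_num) |>.ne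
      have hseteq : {θ | min 1 (H θ)⁻¹ ≤ ε} = {θ | ε⁻¹ ≤ H θ} := by
        ext θ
        simp only [mem_setOf_eq]
        rw [min_le_iff]
        constructor
        · rintro (h | h)
          · exact absurd h (not_le.2 hε1)
          · exact ENNReal.inv_le_iff_inv_le.1 h
        · intro h
          exact Or.inr (ENNReal.inv_le_iff_inv_le.2 h)
      rw [hseteq]
      have hmark := mul_meas_ge_le_lintegral₀ (μ := Q) hHmeas.aemeasurable ε⁻¹
      calc Q {θ | ε⁻¹ ≤ H θ} = ε * (ε⁻¹ * Q {θ | ε⁻¹ ≤ H θ}) := by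
            rw [← mul_assoc, ENNReal.mul_inv_cancel hε.ne' hεtop, one_mul]
      _ ≤ ε * (∫⁻ θ, H θ ∂Q) := mul_le_mul_right hmark _
      _ ≤ ε * 1 := mul_le_mul_right hHint _
      _ = ε := mul_one _
    · -- a.e. inequality
      refine Filter.Eventually.of_forall fun x => ?_
      by_cases hH : H x.2 = ∞
      · simp [hH]
      · have hinv : (e x)⁻¹ = κE⁻¹ * f x ^ (1 - κ) := by
          rw [hedef]
          simp only
          rw [ENNReal.mul_inv (Or.inl hκE0) (Or.inl hκEtop), ← ENNReal.rpow_neg,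
            show -(κ - 1) = 1 - κ by ring]
        calc (if H x.2 = ∞ then 1 else min 1 (H x.2 * (e x)⁻¹)) * min 1 (H x.2)⁻¹
            ≤ (H x.2 * (e x)⁻¹) * (H x.2)⁻¹ := by
              rw [if_neg hH]
              exact mul_le_mul' (min_le_right _ _) (min_le_right _ _)
        _ = (e x)⁻¹ * (H x.2 * (H x.2)⁻¹) := by ring
        _ = (e x)⁻¹ := by rw [ENNReal.mul_inv_cancel (hH0 x.2) hH, mul_one]
        _ = κE⁻¹ * f x ^ (1 - κ) := hinv
  · -- part (b)
    intro g h hg hg1 hgp hh hh1 hhp ε hε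
    by_cases hε1 : 1 ≤ ε
    · exact le_trans prob_le_one hε1
    push_neg at hε1
    have hεtop : ε ≠ ∞ := hε1.trans (by norm_num) |>.ne
    set c : ℝ≥0∞ := κE ^ 2 * ε with hcdef
    have hsq0 : κE ^ 2 ≠ 0 := pow_ne_zero _ hκE0
    have hsqtop : κE ^ 2 ≠ ∞ := ENNReal.pow_ne_top hκEtop
    have hc0 : c ≠ 0 := mul_ne_zero hsq0 hε.ne'
    have hcfin : c ≠ ∞ := ENNReal.mul_ne_top hsqtop hεtop
    have hc1 : c ≤ 1 := by
      calc c ≤ 1 * ε := mul_le_mul_left (pow_le_one₀ zero_le hκE1.le) _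
      _ = ε := one_mul _
      _ ≤ 1 := hε1.le
    have h1κ : (0:ℝ) < 1 - κ := by linarith
    set t : ℝ≥0∞ := c ^ (1-κ)⁻¹ with htdef
    have htc : t ^ (1-κ) = c := by
      rw [htdef, ← ENNReal.rpow_mul, inv_mul_cancel₀ h1κ.ne', ENNReal.rpow_one]
    have ht0 : t ≠ 0 := by
      rw [htdef]
      simp [ENNReal.rpow_eq_zero_iff, hc0, hcfin]
    have httop : t ≠ ∞ := by
      rw [htdef]
      simp [ENNReal.rpow_eq_top_iff, hc0, hcfin]
    have ht1 : t ≤ 1 := ENNReal.rpow_le_one hc1 (by positivity)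
    set t' : ℝ := t.toReal with ht'def
    have ht'0 : 0 < t' := ENNReal.toReal_pos ht0 httop
    have ht'1 : t' ≤ 1 := by
      rw [ht'def, ← ENNReal.toReal_one]
      exact ENNReal.toReal_mono (by norm_num) ht1
    have htt : t = ENNReal.ofReal t' := (ENNReal.ofReal_toReal httop).symm
    -- rewrite the set
    have hiff : ∀ u : ℝ≥0∞, ((κE ^ 2)⁻¹ * u ≤ ε ↔ u ≤ c) := by
      intro u
      constructor
      · intro hu
        calc u = κE ^ 2 * ((κE ^ 2)⁻¹ * u) := by
              rw [← mul_assoc, ENNReal.mul_inv_cancel hsq0 hsqtop, one_mul]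
        _ ≤ κE ^ 2 * ε := mul_le_mul_right hu _
      · intro hu
        calc (κE ^ 2)⁻¹ * u ≤ (κE ^ 2)⁻¹ * (κE ^ 2 * ε) := mul_le_mul_right hu _
        _ = ε := by rw [← mul_assoc, ENNReal.inv_mul_cancel hsq0 hsqtop, one_mul]
    have hseteq : {x : Ω × Θ | min 1 ((κE ^ 2)⁻¹ * (g x * h x.2) ^ (1 - κ)) ≤ ε}
        = {x : Ω × Θ | g x * h x.2 ≤ t} := by
      ext x
      simp only [mem_setOf_eq]
      rw [min_le_iff]
      constructor
      · rintro (h' | h')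
        · exact absurd h' (not_le.2 hε1)
        · have := (hiff _).1 h'
          rw [← htc] at this
          exact (ENNReal.rpow_le_rpow_iff h1κ).1 this
      · intro h'
        refine Or.inr ((hiff _).2 ?_)
        rw [← htc]
        exact (ENNReal.rpow_le_rpow_iff h1κ).2 h'
    rw [hseteq, Tapp _ (measurableSet_le (by fun_prop) measurable_const)]
    have hbound : ∀ θ, P θ {ω | (ω, θ) ∈ {x : Ω × Θ | g x * h x.2 ≤ t}}
        ≤ min 1 (t * (h θ)⁻¹) := by
      intro θ
      refine le_min prob_le_one ?_
      have hsub : {ω | (ω, θ) ∈ {x : Ω × Θ | g x * h x.2 ≤ t}}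
          ⊆ {ω | g (ω, θ) ≤ t * (h θ)⁻¹} := by
        intro ω hω
        simp only [mem_setOf_eq] at hω ⊢
        rcases eq_or_ne (h θ) 0 with hh0 | hh0
        · rw [hh0]
          simp [ENNReal.mul_top ht0]
        · have hhfin : h θ ≠ ∞ := (lt_of_le_of_lt (hh1 θ) (by norm_num)).ne
          calc g (ω, θ) = g (ω, θ) * h θ * (h θ)⁻¹ := by
                rw [mul_assoc, ENNReal.mul_inv_cancel hh0 hhfin, mul_one]
          _ ≤ t * (h θ)⁻¹ := mul_le_mul_left hω _
      refine le_trans (measure_mono hsub) ?_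
      exact hgp θ _ (ENNReal.mul_pos ht0 (ENNReal.inv_ne_zero.2
        (lt_of_le_of_lt (hh1 θ) (by norm_num)).ne))
    calc ∫⁻ θ, P θ {ω | (ω, θ) ∈ {x : Ω × Θ | g x * h x.2 ≤ t}} ∂Q
        ≤ ∫⁻ θ, min 1 (t * (h θ)⁻¹) ∂Q := lintegral_mono hbound
    _ ≤ ENNReal.ofReal (t' * (1 + Real.log (1/t'))) := by
        rw [htt]
        exact pfun_bound_int Q hh hh1 hhp ht'0 ht'1
    _ ≤ ENNReal.ofReal (κ⁻¹ * κ⁻¹ * t' ^ (1-κ)) :=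
        ENNReal.ofReal_le_ofReal (pfun_keyineq hκ0 hκ1 ht'0 ht'1)
    _ = ε := by
        rw [ENNReal.ofReal_mul (by positivity), ENNReal.ofReal_mul (by positivity),
          ENNReal.ofReal_inv_of_pos hκ0, ← ENNReal.ofReal_rpow_of_pos ht'0, ← htt, htc,
          hcdef]
        show κE⁻¹ * κE⁻¹ * (κE ^ 2 * ε) = ε
        rw [sq]
        rw [show κE⁻¹ * κE⁻¹ * (κE * κE * ε) = (κE⁻¹ * κE) * ((κE⁻¹ * κE) * ε) by ring,
          ENNReal.inv_mul_cancel hκE0 hκEtop, one_mul, one_mul]
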